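/- Fix $R \in [1,\infty]$, $\theta \in (0,1]$, and let $\varphi$ be a conformal (injective holomorphic) map on $(-R,R) \times i(0,\infty)$. If there exists $C \in (0,\infty)$ such that $|\varphi'(z)| \le C\,\max\{(\mathrm{Im}\,z)^{\theta-1}, 1\}$ for all $z$ in the domain, then $\varphi$ extends to a continuous function on the closure $\overline{(-R,R) \times i(0,\infty)}$. -/

import Mathlib

open Set Complex Filter Topology

private lemma rpow_sub_le' {θ : ℝ} (hθ0 : 0 < θ) (hθ1 : θ ≤ 1) {a b : ℝ}
    (ha : 0 ≤ a) (hab : a ≤ b) : b ^ θ - a ^ θ ≤ (b - a) ^ θ := by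
  have hba : (0:ℝ) ≤ b - a := sub_nonneg.2 hab
  have h := NNReal.coe_le_coe.2
    (NNReal.rpow_add_le_add_rpow a.toNNReal (b - a).toNNReal hθ0.le hθ1)
  push_cast [Real.coe_toNNReal _ ha, Real.coe_toNNReal _ hba] at h
  have hb : a + (b - a) = b := by ring
  rw [hb] at h
  linarith

set_option maxHeartbeats 1000000 in
/-- If a conformal map `φ` on `(-R,R) × i(0,∞)` (with `R ∈ [1,∞]`) satisfies the derivative
bound `|φ'(z)| ≤ C * max ((Im z)^(θ-1)) 1`, then `φ` extends continuously to the closure. -/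
theorem holder_extension_of_deriv_bound
    (R : EReal) (hR : 1 ≤ R) (θ : ℝ) (hθ0 : 0 < θ) (hθ1 : θ ≤ 1)
    (D : Set ℂ)
    (hD : D = {z : ℂ | 0 < z.im ∧ -R < (z.re : EReal) ∧ (z.re : EReal) < R})
    (φ : ℂ → ℂ)
    (hinj : Set.InjOn φ D) (hdiff : DifferentiableOn ℂ φ D)
    (C : ℝ) (hC : 0 < C)
    (hbound : ∀ z ∈ D, ‖deriv φ z‖ ≤ C * max (z.im ^ (θ - 1)) 1) :
    ∃ g : ℂ → ℂ, ContinuousOn g (closure D) ∧ Set.EqOn g φ D := by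
  -- D is open
  have hDo : IsOpen D := by
    rw [hD]
    have h1 : IsOpen {z : ℂ | 0 < z.im} := isOpen_lt continuous_const Complex.continuous_im
    have h2 : IsOpen {z : ℂ | -R < (z.re : EReal)} :=
      isOpen_lt continuous_const (continuous_coe_real_ereal.comp Complex.continuous_re)
    have h3 : IsOpen {z : ℂ | (z.re : EReal) < R} :=
      isOpen_lt (continuous_coe_real_ereal.comp Complex.continuous_re) continuous_const
    exact h1.inter (h2.inter h3)
  have hmem : ∀ x y : ℝ, 0 < y → -R < (x:EReal) → (x:EReal) < R → ((x:ℂ) + (y:ℂ)*I) ∈ D := by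
    intro x y hy hx1 hx2
    rw [hD]
    refine ⟨by simp [hy], by simpa using hx1, by simpa using hx2⟩
  have hder : ∀ z ∈ D, HasDerivAt φ (deriv φ z) z := fun z hz =>
    (hdiff.differentiableAt (hDo.mem_nhds hz)).hasDerivAt
  have hφcont : ContinuousOn φ D := hdiff.continuousOn
  -- derivative of t ↦ φ (x + t I)
  have hfd : ∀ x t : ℝ, ((x:ℂ) + (t:ℂ)*I) ∈ D →
      HasDerivAt (fun s : ℝ => φ ((x:ℂ) + (s:ℂ)*I)) (deriv φ ((x:ℂ) + (t:ℂ)*I) * I) t := by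
    intro x t ht
    have h1 : HasDerivAt (fun w : ℂ => (x:ℂ) + w * I) I (t:ℂ) := by
      simpa using ((hasDerivAt_id ((t:ℝ):ℂ)).mul_const I).const_add (x:ℂ)
    have h2 : HasDerivAt (fun w : ℂ => φ ((x:ℂ) + w * I)) (deriv φ ((x:ℂ) + (t:ℂ)*I) * I) (t:ℂ) :=
      HasDerivAt.comp _ (hder _ ht) h1
    exact h2.comp_ofReal
  -- derivative of t ↦ φ (t + Y I)
  have hgd : ∀ Y t : ℝ, ((t:ℂ) + (Y:ℂ)*I) ∈ D →
      HasDerivAt (fun s : ℝ => φ ((s:ℂ) + (Y:ℂ)*I)) (deriv φ ((t:ℂ) + (Y:ℂ)*I)) t := by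
    intro Y t ht
    have h1 : HasDerivAt (fun w : ℂ => w + (Y:ℂ) * I) 1 (t:ℂ) :=
      (hasDerivAt_id _).add_const _
    have h2 : HasDerivAt (fun w : ℂ => φ (w + (Y:ℂ) * I)) (deriv φ ((t:ℂ) + (Y:ℂ)*I) * 1) (t:ℂ) :=
      HasDerivAt.comp _ (hder _ ht) h1
    simpa using h2.comp_ofReal
  -- vertical estimate
  have vert : ∀ x a b : ℝ, 0 < a → a ≤ b → -R < (x:EReal) → (x:EReal) < R →
      ‖φ ((x:ℂ) + (b:ℂ)*I) - φ ((x:ℂ) + (a:ℂ)*I)‖ ≤ C * ((b^θ - a^θ)/θ + (b - a)) := by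
    intro x a b ha hab hx1 hx2
    set f : ℝ → ℂ := fun t => φ ((x:ℂ) + (t:ℂ)*I) - φ ((x:ℂ) + (a:ℂ)*I) with hfdef
    set B : ℝ → ℝ := fun t => C * ((t^θ - a^θ)/θ + (t - a)) with hBdef
    set B' : ℝ → ℝ := fun t => C * (t^(θ-1) + 1) with hB'def
    have hmemt : ∀ t, t ∈ Icc a b → ((x:ℂ) + (t:ℂ)*I) ∈ D :=
      fun t ht => hmem x t (lt_of_lt_of_le ha ht.1) hx1 hx2
    have hf' : ∀ t ∈ Icc a b, HasDerivAt f (deriv φ ((x:ℂ) + (t:ℂ)*I) * I) t :=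
      fun t ht => (hfd x t (hmemt t ht)).sub_const _
    have hBd : ∀ t ∈ Icc a b, HasDerivAt B (B' t) t := by
      intro t ht
      have ht0 : (0:ℝ) < t := lt_of_lt_of_le ha ht.1
      have h1 : HasDerivAt (fun s : ℝ => (s^θ - a^θ)/θ + (s - a)) (θ * t^(θ-1)/θ + 1) t :=
        (((Real.hasDerivAt_rpow_const (Or.inl ht0.ne')).sub_const _).div_const θ).add
          ((hasDerivAt_id t).sub_const a)
      have h2 := h1.const_mul C
      have h3 : θ * t^(θ-1)/θ = t^(θ-1) := by field_simp
      rw [h3] at h2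
      exact h2
    have hfc : ContinuousOn f (Icc a b) :=
      fun t ht => (hf' t ht).continuousAt.continuousWithinAt
    have hBc : ContinuousOn B (Icc a b) :=
      fun t ht => (hBd t ht).continuousAt.continuousWithinAt
    have ha0 : ‖f a‖ ≤ B a := by simp [hfdef, hBdef]
    have key := image_norm_le_of_norm_deriv_right_le_deriv_boundary' hfc
      (fun t ht => (hf' t (Ico_subset_Icc_self ht)).hasDerivWithinAt) ha0 hBc
      (fun t ht => (hBd t (Ico_subset_Icc_self ht)).hasDerivWithinAt)
      (fun t ht => by
        have ht0 : (0:ℝ) < t := lt_of_lt_of_le ha ht.1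
        have hb := hbound _ (hmemt t (Ico_subset_Icc_self ht))
        have him : ((x:ℂ) + (t:ℂ)*I).im = t := by simp
        rw [him] at hb
        have hmax : max (t^(θ-1)) 1 ≤ t^(θ-1) + 1 :=
          max_le (le_add_of_nonneg_right zero_le_one)
            (le_add_of_nonneg_left (Real.rpow_nonneg ht0.le _))
        calc ‖deriv φ ((x:ℂ) + (t:ℂ)*I) * I‖ = ‖deriv φ ((x:ℂ) + (t:ℂ)*I)‖ := by
              rw [norm_mul, Complex.norm_I, mul_one]
          _ ≤ C * max (t^(θ-1)) 1 := hb
          _ ≤ B' t := mul_le_mul_of_nonneg_left hmax hC.le)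
      (right_mem_Icc.2 hab)
    simpa [hfdef, hBdef] using key
  -- horizontal estimate
  have horiz : ∀ x1 x2 Y : ℝ, 0 < Y → -R < (x1:EReal) → (x1:EReal) < R →
      -R < (x2:EReal) → (x2:EReal) < R →
      ‖φ ((x2:ℂ) + (Y:ℂ)*I) - φ ((x1:ℂ) + (Y:ℂ)*I)‖ ≤ (C * max (Y^(θ-1)) 1) * |x2 - x1| := by
    intro x1 x2 Y hY hx11 hx12 hx21 hx22
    set s : Set ℝ := Icc (min x1 x2) (max x1 x2) with hsdef
    have hmems : ∀ t ∈ s, ((t:ℂ) + (Y:ℂ)*I) ∈ D := by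
      intro t ht
      apply hmem _ _ hY
      · have h1 : -R < ((min x1 x2 : ℝ) : EReal) := by
          rcases min_cases x1 x2 with ⟨h, _⟩ | ⟨h, _⟩ <;> rw [h] <;> assumption
        exact lt_of_lt_of_le h1 (EReal.coe_le_coe_iff.2 ht.1)
      · have h1 : ((max x1 x2 : ℝ) : EReal) < R := by
          rcases max_cases x1 x2 with ⟨h, _⟩ | ⟨h, _⟩ <;> rw [h] <;> assumption
        exact lt_of_le_of_lt (EReal.coe_le_coe_iff.2 ht.2) h1
    have hds : ∀ t ∈ s, HasDerivWithinAt (fun u : ℝ => φ ((u:ℂ) + (Y:ℂ)*I))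
        (deriv φ ((t:ℂ) + (Y:ℂ)*I)) s t :=
      fun t ht => (hgd Y t (hmems t ht)).hasDerivWithinAt
    have hbnd : ∀ t ∈ s, ‖deriv φ ((t:ℂ) + (Y:ℂ)*I)‖ ≤ C * max (Y^(θ-1)) 1 := by
      intro t ht
      have hb := hbound _ (hmems t ht)
      have him : ((t:ℂ) + (Y:ℂ)*I).im = Y := by simp
      rwa [him] at hb
    have := (convex_Icc _ _).norm_image_sub_le_of_norm_hasDerivWithin_le hds hbnd
      (⟨min_le_left _ _, le_max_left _ _⟩ : x1 ∈ s) (⟨min_le_right _ _, le_max_right _ _⟩ : x2 ∈ s)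
    simpa [Real.norm_eq_abs] using this
  -- key Hölder estimate
  set K : ℝ := 3 * C / θ with hKdef
  have hK : 0 < K := by positivity
  have key : ∀ z ∈ D, ∀ w ∈ D, ‖φ z - φ w‖ ≤ K * (‖z - w‖^θ + ‖z - w‖) := by
    intro z hz w hw
    rcases eq_or_ne z w with rfl | hne
    · simp only [sub_self, norm_zero]
      rw [Real.zero_rpow hθ0.ne']
      simp
    have hz' := hz; have hw' := hw
    rw [hD] at hz' hw'
    obtain ⟨hy1, hzx1, hzx2⟩ := hz'
    obtain ⟨hy2, hwx1, hwx2⟩ := hw'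
    set x1 := z.re; set y1 := z.im; set x2 := w.re; set y2 := w.im
    set d := ‖z - w‖ with hddef
    have hd0 : 0 < d := by
      rw [hddef]
      exact norm_sub_pos_iff.2 hne
    set Y := max (max y1 y2) d with hYdef
    have hY0 : 0 < Y := lt_of_lt_of_le hy1 ((le_max_left _ _).trans (le_max_left _ _))
    have hy1Y : y1 ≤ Y := (le_max_left _ _).trans (le_max_left _ _)
    have hy2Y : y2 ≤ Y := (le_max_right _ _).trans (le_max_left _ _)
    have hdY : d ≤ Y := le_max_right _ _
    have hre : |x1 - x2| ≤ d := by
      have h1 : |(z - w).re| ≤ ‖z - w‖ := Complex.abs_re_le_norm _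
      rw [hddef]
      simpa using h1
    have him : |y1 - y2| ≤ d := by
      have h1 : |(z - w).im| ≤ ‖z - w‖ := Complex.abs_im_le_norm _
      rw [hddef]
      simpa using h1
    have him' := abs_le.1 him
    have hY1d : Y - y1 ≤ d := by
      rw [hYdef]
      rcases max_cases (max y1 y2) d with ⟨h, _⟩ | ⟨h, _⟩
      · rw [h]
        rcases max_cases y1 y2 with ⟨h2, _⟩ | ⟨h2, _⟩ <;> rw [h2] <;> linarith
      · rw [h]; linarith
    have hY2d : Y - y2 ≤ d := by
      rw [hYdef]
      rcases max_cases (max y1 y2) d with ⟨h, _⟩ | ⟨h, _⟩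
      · rw [h]
        rcases max_cases y1 y2 with ⟨h2, _⟩ | ⟨h2, _⟩ <;> rw [h2] <;> linarith
      · rw [h]; linarith
    -- pieces
    have A1 := vert x1 y1 Y hy1 hy1Y hzx1 hzx2
    have A2 := horiz x1 x2 Y hY0 hzx1 hzx2 hwx1 hwx2
    have A3 := vert x2 y2 Y hy2 hy2Y hwx1 hwx2
    rw [Complex.re_add_im] at A1 A3
    -- triangle inequality
    have tri : ‖φ z - φ w‖ ≤ ‖φ ((x1:ℂ) + (Y:ℂ)*I) - φ z‖
        + ‖φ ((x2:ℂ) + (Y:ℂ)*I) - φ ((x1:ℂ) + (Y:ℂ)*I)‖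
        + ‖φ ((x2:ℂ) + (Y:ℂ)*I) - φ w‖ := by
      have heq : φ z - φ w = -(φ ((x1:ℂ) + (Y:ℂ)*I) - φ z)
          + -(φ ((x2:ℂ) + (Y:ℂ)*I) - φ ((x1:ℂ) + (Y:ℂ)*I))
          + (φ ((x2:ℂ) + (Y:ℂ)*I) - φ w) := by ring
      rw [heq]
      refine (norm_add₃_le).trans ?_
      rw [norm_neg, norm_neg]
    -- rpow bounds
    have hdθ : (0:ℝ) ≤ d^θ := Real.rpow_nonneg hd0.le _
    have b1 : Y^θ - y1^θ ≤ d^θ :=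
      (rpow_sub_le' hθ0 hθ1 hy1.le hy1Y).trans
        (Real.rpow_le_rpow (by linarith) hY1d hθ0.le)
    have b3 : Y^θ - y2^θ ≤ d^θ :=
      (rpow_sub_le' hθ0 hθ1 hy2.le hy2Y).trans
        (Real.rpow_le_rpow (by linarith) hY2d hθ0.le)
    have b2 : max (Y^(θ-1)) 1 * |x1 - x2| ≤ d^θ + d := by
      have h1 : Y^(θ-1) ≤ d^(θ-1) := Real.rpow_le_rpow_of_nonpos hd0 hdY (by linarith)
      have h2 : max (Y^(θ-1)) 1 ≤ d^(θ-1) + 1 :=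
        max_le (h1.trans (le_add_of_nonneg_right zero_le_one))
          (le_add_of_nonneg_left (Real.rpow_nonneg hd0.le _))
      have h3 : max (Y^(θ-1)) 1 * |x1 - x2| ≤ (d^(θ-1) + 1) * d := by
        apply mul_le_mul h2 hre (abs_nonneg _)
        positivity
      have h4 : (d^(θ-1) + 1) * d = d^θ + d := by
        rw [add_mul, one_mul]
        congr 1
        rw [← Real.rpow_add_one hd0.ne' (θ-1)]
        ring_nf
      linarith
    -- combine
    have htot := tri.trans (add_le_add (add_le_add A1 A2) A3)
    have habs : |x2 - x1| = |x1 - x2| := abs_sub_comm _ _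
    rw [habs] at htot
    have hCθ : C ≤ C / θ := by
      rw [le_div_iff₀ hθ0]
      nlinarith
    have e1 : C * ((Y^θ - y1^θ)/θ + (Y - y1)) ≤ C * (d^θ/θ + d) := by
      apply mul_le_mul_of_nonneg_left _ hC.le
      have h1 : (Y^θ - y1^θ)/θ ≤ d^θ/θ := by gcongr
      linarith
    have e3 : C * ((Y^θ - y2^θ)/θ + (Y - y2)) ≤ C * (d^θ/θ + d) := by
      apply mul_le_mul_of_nonneg_left _ hC.le
      have h1 : (Y^θ - y2^θ)/θ ≤ d^θ/θ := by gcongr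
      linarith
    have e2 : C * max (Y^(θ-1)) 1 * |x1 - x2| ≤ C * (d^θ + d) := by
      rw [mul_assoc]
      exact mul_le_mul_of_nonneg_left b2 hC.le
    have hx1 : C * d^θ ≤ C/θ * d^θ := mul_le_mul_of_nonneg_right hCθ hdθ
    have hx2 : C * d ≤ C/θ * d := mul_le_mul_of_nonneg_right hCθ hd0.le
    have t1 : C * (d^θ/θ + d) ≤ C/θ * d^θ + C/θ * d := by
      calc C * (d^θ/θ + d) = C/θ * d^θ + C * d := by ring
        _ ≤ C/θ * d^θ + C/θ * d := by linarith
    have t2 : C * (d^θ + d) ≤ C/θ * d^θ + C/θ * d := by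
      calc C * (d^θ + d) = C * d^θ + C * d := by ring
        _ ≤ C/θ * d^θ + C/θ * d := by linarith
    have efin : C * (d^θ/θ + d) + C * (d^θ + d) + C * (d^θ/θ + d) ≤ K * (d^θ + d) := by
      calc C * (d^θ/θ + d) + C * (d^θ + d) + C * (d^θ/θ + d)
          ≤ 3 * (C/θ * d^θ + C/θ * d) := by linarith
        _ = K * (d^θ + d) := by rw [hKdef]; ring
    linarith
  -- uniform continuity style estimate gives Cauchy limits at boundary points
  have hucont : ∀ ε > (0:ℝ), ∃ δ > (0:ℝ), ∀ z ∈ D, ∀ w ∈ D,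
      dist z w < δ → dist (φ z) (φ w) < ε := by
    intro ε hε
    set δ : ℝ := min 1 ((ε/(2*K))^(1/θ)) with hδdef
    have hδ0 : 0 < δ := lt_min one_pos (Real.rpow_pos_of_pos (by positivity) _)
    refine ⟨δ, hδ0, ?_⟩
    intro z hz w hw hzw
    have hkey := key z hz w hw
    rw [dist_eq_norm] at hzw ⊢
    set d := ‖z - w‖ with hddef
    have hd0 : (0:ℝ) ≤ d := norm_nonneg _
    have hd1 : d < 1 := lt_of_lt_of_le hzw (min_le_left _ _)
    have hdd : d ≤ d^θ := by
      rcases eq_or_lt_of_le hd0 with h | h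
      · rw [← h, Real.zero_rpow hθ0.ne']
      · calc d = d^(1:ℝ) := (Real.rpow_one d).symm
          _ ≤ d^θ := Real.rpow_le_rpow_of_exponent_ge h hd1.le hθ1
    have h2 : d^θ < ε/(2*K) := by
      have hlt : d < (ε/(2*K))^(1/θ) := lt_of_lt_of_le hzw (min_le_right _ _)
      have h := Real.rpow_lt_rpow hd0 hlt hθ0
      rwa [← Real.rpow_mul (by positivity), one_div_mul_cancel hθ0.ne',
        Real.rpow_one] at h
    calc ‖φ z - φ w‖ ≤ K * (d^θ + d) := hkey
      _ ≤ K * (2 * d^θ) := mul_le_mul_of_nonneg_left (by linarith) hK.le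
      _ < K * (2 * (ε/(2*K))) := by
          apply mul_lt_mul_of_pos_left _ hK
          linarith
      _ = ε := by field_simp
  -- limits exist at every point of the closure
  have hlim : ∀ x ∈ closure D, ∃ y, Tendsto φ (𝓝[D] x) (𝓝 y) := by
    intro x hx
    have hne : (𝓝[D] x).NeBot := mem_closure_iff_nhdsWithin_neBot.1 hx
    have hc : Cauchy (Filter.map φ (𝓝[D] x)) := by
      rw [Metric.cauchy_iff]
      constructor
      · exact hne.map φ
      · intro ε hε
        obtain ⟨δ, hδ0, hδ⟩ := hucont ε hε
        refine ⟨φ '' (D ∩ Metric.ball x (δ/2)), Filter.image_mem_map ?_, ?_⟩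
        · exact Filter.inter_mem self_mem_nhdsWithin
            (mem_nhdsWithin_of_mem_nhds (Metric.ball_mem_nhds x (by positivity)))
        · rintro _ ⟨a, ⟨haD, hab⟩, rfl⟩ _ ⟨b, ⟨hbD, hbb⟩, rfl⟩
          apply hδ a haD b hbD
          rw [Metric.mem_ball] at hab hbb
          have h1 := dist_triangle a x b
          rw [dist_comm x b] at h1
          linarith
    obtain ⟨y, hy⟩ := CompleteSpace.complete hc
    exact ⟨y, hy⟩
  exact ⟨extendFrom D φ, continuousOn_extendFrom Subset.rfl hlim,
    fun z hz => extendFrom_extends hφcont z hz⟩
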